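/- arXiv:2105.02429 — 4 statements merged into one kernel-verified Lean document; each statement's English description precedes it below -/
import Mathlib

section
/- Let P be a finite poset on {1,...,n} and L = g^≺(P) the nilpotent Lie poset algebra, spanned by E_{p,q} for p ≺ q with the commutator bracket. Then the center Z(L) equals the span of {E_{p,q} : p is minimal in P and q is maximal in P and p ≺ q}. -/
/-- The matrix unit `E p q`. -/
noncomputable def matE {α : Type*} [DecidableEq α] (p q : α) : Matrix α α ℂ :=
  Matrix.single p q 1

lemma mem_span_matE {α : Type*} [Fintype α] [DecidableEq α] (Pred : α → α → Prop)
    (m : Matrix α α ℂ) :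
    m ∈ Submodule.span ℂ {m : Matrix α α ℂ | ∃ p q : α, Pred p q ∧ m = matE p q} ↔
      ∀ p q : α, ¬ Pred p q → m p q = 0 := by
  constructor
  · intro hm
    induction hm using Submodule.span_induction with
    | mem x hx =>
      obtain ⟨p, q, hpq, rfl⟩ := hx
      intro p' q' h
      have : ¬ (p = p' ∧ q = q') := by rintro ⟨rfl, rfl⟩; exact h hpq
      simp [matE, Matrix.single, this]
    | zero => simp
    | add x y _ _ hx hy => intro p q h; simp [hx p q h, hy p q h]
    | smul c x _ hx => intro p q h; simp [hx p q h]
  · intro h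
    rw [Matrix.matrix_eq_sum_single m]
    refine Submodule.sum_mem _ fun p _ => Submodule.sum_mem _ fun q _ => ?_
    by_cases hpq : Pred p q
    · have : Matrix.single p q (m p q) = m p q • matE p q := by
        simp [matE]
      rw [this]
      exact Submodule.smul_mem _ _ (Submodule.subset_span ⟨p, q, hpq, rfl⟩)
    · rw [h p q hpq]
      simp

lemma bracket_entry {α : Type*} [Fintype α] [DecidableEq α] (z y : Matrix α α ℂ)
    (h : ⁅z, y⁆ = 0) (i j : α) :
    ∑ k, z i k * y k j = ∑ k, y i k * z k j := by
  have h2 : z * y - y * z = 0 := h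
  have h3 : (z * y) i j = (y * z) i j := by rw [sub_eq_zero.mp h2]
  simpa [Matrix.mul_apply] using h3

/-- For a finite poset `P` and the nilpotent Lie poset algebra
`L = g^≺(P) = span{E p q : p ≺ q}`, the center `Z(L)` equals the span of the
matrix units `E p q` where `p ≺ q`, `p` is minimal and `q` is maximal. -/
theorem nilpotent_lie_poset_center (α : Type*) [Fintype α] [DecidableEq α] [PartialOrder α] :
    let L : Submodule ℂ (Matrix α α ℂ) :=
      Submodule.span ℂ {m : Matrix α α ℂ | ∃ p q : α, p < q ∧ m = matE p q}
    {z : Matrix α α ℂ | z ∈ L ∧ ∀ y ∈ L, ⁅z, y⁆ = 0} =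
      ↑(Submodule.span ℂ {m : Matrix α α ℂ |
        ∃ p q : α, p < q ∧ (∀ r, ¬ r < p) ∧ (∀ r, ¬ q < r) ∧ m = matE p q}) := by
  intro L
  have hL : ∀ m : Matrix α α ℂ, m ∈ L ↔ ∀ p q : α, ¬ p < q → m p q = 0 :=
    fun m => mem_span_matE (· < ·) m
  ext z
  simp only [Set.mem_setOf_eq, SetLike.mem_coe]
  rw [show {m : Matrix α α ℂ | ∃ p q : α, p < q ∧ (∀ r, ¬ r < p) ∧ (∀ r, ¬ q < r) ∧
      m = matE p q} = {m : Matrix α α ℂ | ∃ p q : α,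
      (p < q ∧ (∀ r, ¬ r < p) ∧ (∀ r, ¬ q < r)) ∧ m = matE p q} by
    ext m; constructor
    · rintro ⟨p, q, h1, h2, h3, h4⟩; exact ⟨p, q, ⟨h1, h2, h3⟩, h4⟩
    · rintro ⟨p, q, ⟨h1, h2, h3⟩, h4⟩; exact ⟨p, q, h1, h2, h3, h4⟩]
  rw [mem_span_matE (fun p q => p < q ∧ (∀ r, ¬ r < p) ∧ (∀ r, ¬ q < r))]
  constructor
  · rintro ⟨hzL, hc⟩ p q hpq
    by_cases hlt : p < q
    · have hne : p ≠ q := ne_of_lt hlt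
      have h' : (∃ r, r < p) ∨ (∃ r, q < r) := by
        by_contra hcon
        push_neg at hcon
        exact hpq ⟨hlt, hcon.1, hcon.2⟩
      rcases h' with ⟨r, hrp⟩ | ⟨r, hqr⟩
      · have hb := bracket_entry z (matE r p)
          (hc _ (Submodule.subset_span ⟨r, p, hrp, rfl⟩)) r q
        simpa [matE, Matrix.single, hne, Finset.sum_ite_eq,
          eq_comm] using hb.symm
      · have hb := bracket_entry z (matE q r)
          (hc _ (Submodule.subset_span ⟨q, r, hqr, rfl⟩)) p r
        simpa [matE, Matrix.single, hne.symm, Finset.sum_ite_eq,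
          eq_comm] using hb
    · exact (hL z).mp hzL p q hlt
  · intro h
    have hzL : z ∈ L := by
      rw [hL]
      intro p q hpq
      exact h p q (fun hh => hpq hh.1)
    refine ⟨hzL, fun y hy => ?_⟩
    induction hy using Submodule.span_induction with
    | mem x hx =>
      obtain ⟨r, s, hrs, rfl⟩ := hx
      show z * matE r s - matE r s * z = 0
      rw [sub_eq_zero]
      ext i j
      have hz1 : z i r = 0 := h i r (by rintro ⟨-, -, hmax⟩; exact hmax s hrs)
      have hz2 : z s j = 0 := h s j (by rintro ⟨-, hmin, -⟩; exact hmin r hrs)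
      simp [Matrix.mul_apply, matE, Matrix.single, mul_ite, ite_mul,
        hz1, hz2, Finset.sum_ite_eq, ite_and]
    | zero => rw [Ring.lie_def]; simp
    | add x y _ _ hx hy =>
      rw [Ring.lie_def] at hx hy ⊢
      rw [mul_add, add_mul, add_sub_add_comm, hx, hy, add_zero]
    | smul c x _ hx =>
      rw [Ring.lie_def] at hx ⊢
      rw [mul_smul_comm, smul_mul_assoc, ← smul_sub, hx, smul_zero]
end

section
/- Let L = g(r_0, r_1, r_2) be the nilpotent Lie poset algebra of the three-level poset P(r_0,r_1,r_2), spanned by E_{b_i,m_j}, E_{m_j,t_k}, E_{b_i,t_k}. If r_1 ≥ r_0 or r_1 ≥ r_2, then b(L) = r_0·r_2. -/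
/-- The strict order relation of the three-level poset `P(r₀,r₁,r₂)`. -/
def P3lt (r0 r1 r2 : ℕ) : (Fin r0 ⊕ Fin r1 ⊕ Fin r2) → (Fin r0 ⊕ Fin r1 ⊕ Fin r2) → Prop
  | Sum.inl _, Sum.inr _ => True
  | Sum.inr (Sum.inl _), Sum.inr (Sum.inr _) => True
  | _, _ => False

attribute [local instance 100] LieRing.ofAssociativeRing

section Aux

lemma matE_mul {α : Type*} [DecidableEq α] [Fintype α] (p q p' q' : α) :
    matE p q * matE p' q' = if q = p' then matE p q' else 0 := by
  split_ifs with hq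
  · subst hq
    have := Matrix.single_mul_single_same (i := p) (j := q) (c := (1:ℂ)) q' 1
    simpa [matE] using this
  · exact Matrix.single_mul_single_of_ne (c := (1:ℂ)) p q p' hq 1

variable {r0 r1 r2 : ℕ}

abbrev Idx3 (r0 r1 r2 : ℕ) := Fin r0 ⊕ Fin r1 ⊕ Fin r2

noncomputable def Lspan (r0 r1 r2 : ℕ) :
    Submodule ℂ (Matrix (Idx3 r0 r1 r2) (Idx3 r0 r1 r2) ℂ) :=
  Submodule.span ℂ {m | ∃ p q, P3lt r0 r1 r2 p q ∧ m = matE p q}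

/-- Span of the top-level matrix units `E_{b_i,t_k}`. -/
noncomputable def Tspan (r0 r1 r2 : ℕ) :
    Submodule ℂ (Matrix (Idx3 r0 r1 r2) (Idx3 r0 r1 r2) ℂ) :=
  Submodule.span ℂ
    (Set.range fun p : Fin r0 × Fin r2 => matE (Sum.inl p.1 : Idx3 r0 r1 r2) (Sum.inr (Sum.inr p.2)))

lemma Tspan_finrank (r0 r1 r2 : ℕ) : Module.finrank ℂ (Tspan r0 r1 r2) = r0 * r2 := by
  have hli : LinearIndependent ℂ
      (fun p : Fin r0 × Fin r2 => matE (Sum.inl p.1 : Idx3 r0 r1 r2) (Sum.inr (Sum.inr p.2))) := by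
    have hb := (Matrix.stdBasis ℂ (Idx3 r0 r1 r2) (Idx3 r0 r1 r2)).linearIndependent
    have := hb.comp (fun p : Fin r0 × Fin r2 => (Sum.inl p.1, Sum.inr (Sum.inr p.2)))
      (by intro a b hab; simp_all [Prod.ext_iff])
    convert this using 1
    funext p
    simp [matE, Matrix.stdBasis_eq_single]
  rw [Tspan, finrank_span_eq_card hli]
  simp

lemma gen_mul_mem (p q p' q' : Idx3 r0 r1 r2) (h : P3lt r0 r1 r2 p q)
    (h' : P3lt r0 r1 r2 p' q') : matE p q * matE p' q' ∈ Tspan r0 r1 r2 := by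
  rw [matE_mul]
  split_ifs with hq
  · rcases p with i | j | k <;> rcases q with i' | j' | k' <;>
      rcases p' with i2 | j2 | k2 <;> rcases q' with i3 | j3 | k3 <;>
      (try exact False.elim h) <;> (try exact False.elim h') <;>
      first
        | exact Submodule.subset_span ⟨(i, k3), rfl⟩
        | exact absurd hq (by simp)
  · exact zero_mem _

lemma map_ad_le (x : Matrix (Idx3 r0 r1 r2) (Idx3 r0 r1 r2) ℂ) (hx : x ∈ Lspan r0 r1 r2) :
    Submodule.map (LieAlgebra.ad ℂ (Matrix (Idx3 r0 r1 r2) (Idx3 r0 r1 r2) ℂ) x)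
      (Lspan r0 r1 r2) ≤ Tspan r0 r1 r2 := by
  rw [Lspan, Submodule.map_span]
  refine Submodule.span_le.2 ?_
  rintro _ ⟨m, ⟨p', q', h', rfl⟩, rfl⟩
  simp only [LieAlgebra.ad_apply]
  induction hx using Submodule.span_induction with
  | mem y hy =>
    obtain ⟨p, q, hpq, rfl⟩ := hy
    rw [Ring.lie_def]
    exact sub_mem (gen_mul_mem _ _ _ _ hpq h') (gen_mul_mem _ _ _ _ h' hpq)
  | zero => simp
  | add a b _ _ ha hb => rw [add_lie]; exact add_mem ha hb
  | smul c a _ ha => rw [smul_lie]; exact Submodule.smul_mem _ _ ha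

lemma lower (h : r0 ≤ r1 ∨ r2 ≤ r1) :
    ∃ x ∈ Lspan r0 r1 r2, Tspan r0 r1 r2 ≤
      Submodule.map (LieAlgebra.ad ℂ (Matrix (Idx3 r0 r1 r2) (Idx3 r0 r1 r2) ℂ) x)
        (Lspan r0 r1 r2) := by
  rcases h with hr | hr
  · refine ⟨∑ i : Fin r0, matE (Sum.inl i : Idx3 r0 r1 r2) (Sum.inr (Sum.inl (Fin.castLE hr i))),
      Submodule.sum_mem _ fun i _ => Submodule.subset_span
        ⟨Sum.inl i, Sum.inr (Sum.inl (Fin.castLE hr i)), trivial, rfl⟩, ?_⟩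
    refine Submodule.span_le.2 ?_
    rintro _ ⟨⟨i, k⟩, rfl⟩
    refine ⟨matE (Sum.inr (Sum.inl (Fin.castLE hr i)) : Idx3 r0 r1 r2) (Sum.inr (Sum.inr k)),
      Submodule.subset_span
        ⟨Sum.inr (Sum.inl (Fin.castLE hr i)), Sum.inr (Sum.inr k), trivial, rfl⟩, ?_⟩
    rw [LieAlgebra.ad_apply, Ring.lie_def, Finset.sum_mul, Finset.mul_sum]
    simp [matE_mul, Fin.castLE_inj]
  · refine ⟨∑ k : Fin r2, matE (Sum.inr (Sum.inl (Fin.castLE hr k)) : Idx3 r0 r1 r2)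
        (Sum.inr (Sum.inr k)),
      Submodule.sum_mem _ fun k _ => Submodule.subset_span
        ⟨Sum.inr (Sum.inl (Fin.castLE hr k)), Sum.inr (Sum.inr k), trivial, rfl⟩, ?_⟩
    refine Submodule.span_le.2 ?_
    rintro _ ⟨⟨i, k⟩, rfl⟩
    refine ⟨-matE (Sum.inl i : Idx3 r0 r1 r2) (Sum.inr (Sum.inl (Fin.castLE hr k))),
      Submodule.neg_mem _ (Submodule.subset_span
        ⟨Sum.inl i, Sum.inr (Sum.inl (Fin.castLE hr k)), trivial, rfl⟩), ?_⟩
    rw [LieAlgebra.ad_apply, lie_neg, Ring.lie_def, Finset.sum_mul, Finset.mul_sum]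
    simp [matE_mul, Fin.castLE_inj]

end Aux

/-- For the nilpotent Lie poset algebra `L = g(r₀,r₁,r₂)` of `P(r₀,r₁,r₂)`,
if `r₁ ≥ r₀` or `r₁ ≥ r₂`, then `b(L) = r₀·r₂`. -/
theorem P3_breadth_easy (r0 r1 r2 : ℕ) (h0 : 1 ≤ r0) (h1 : 1 ≤ r1) (h2 : 1 ≤ r2)
    (h : r0 ≤ r1 ∨ r2 ≤ r1) :
    let L : Submodule ℂ (Matrix (Fin r0 ⊕ Fin r1 ⊕ Fin r2) (Fin r0 ⊕ Fin r1 ⊕ Fin r2) ℂ) :=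
      Submodule.span ℂ {m | ∃ p q, P3lt r0 r1 r2 p q ∧ m = matE p q}
    (∃ x ∈ L,
        Module.finrank ℂ
          ↥(Submodule.map
            (LieAlgebra.ad ℂ (Matrix (Fin r0 ⊕ Fin r1 ⊕ Fin r2) (Fin r0 ⊕ Fin r1 ⊕ Fin r2) ℂ) x)
            L) = r0 * r2) ∧
      ∀ x ∈ L,
        Module.finrank ℂ
          ↥(Submodule.map
            (LieAlgebra.ad ℂ (Matrix (Fin r0 ⊕ Fin r1 ⊕ Fin r2) (Fin r0 ⊕ Fin r1 ⊕ Fin r2) ℂ) x)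
            L) ≤ r0 * r2 := by
  intro L
  have hL : L = Lspan r0 r1 r2 := rfl
  constructor
  · obtain ⟨x, hxL, hlow⟩ := lower h
    refine ⟨x, hL ▸ hxL, ?_⟩
    rw [hL]
    rw [le_antisymm (map_ad_le x hxL) hlow, Tspan_finrank]
  · intro x hx
    rw [hL] at hx ⊢
    rw [← Tspan_finrank r0 r1 r2]
    exact Submodule.finrank_mono (map_ad_le x hx)
end

section
/- Let L = g(r_0, r_1, r_2) be the nilpotent Lie poset algebra of the three-level poset P(r_0,r_1,r_2). For x = Σ_{i=1}^{min(r_0,r_1)} E_{b_i,m_i}, the image of ad_x contains E_{b_i,t_j} for all 1 ≤ i ≤ min(r_0,r_1) and 1 ≤ j ≤ r_2; in particular if r_1 ≥ r_0 then rank(ad_x) ≥ r_0 r_2. -/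
attribute [local instance 100] LieRing.ofAssociativeRing

lemma P3_bracket (r0 r1 r2 : ℕ) (i : Fin (min r0 r1)) (j : Fin r2) :
    ⁅((∑ k : Fin (min r0 r1),
        matE (Sum.inl (Fin.castLE (min_le_left r0 r1) k))
          (Sum.inr (Sum.inl (Fin.castLE (min_le_right r0 r1) k)))) :
        Matrix (Fin r0 ⊕ Fin r1 ⊕ Fin r2) (Fin r0 ⊕ Fin r1 ⊕ Fin r2) ℂ),
      matE (Sum.inr (Sum.inl (Fin.castLE (min_le_right r0 r1) i)))
        (Sum.inr (Sum.inr j) : Fin r0 ⊕ Fin r1 ⊕ Fin r2)⁆ =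
    matE (Sum.inl (Fin.castLE (min_le_left r0 r1) i)) (Sum.inr (Sum.inr j)) := by
  rw [Ring.lie_def, Finset.sum_mul, Finset.mul_sum]
  have h1 : ∀ k : Fin (min r0 r1),
      matE (Sum.inr (Sum.inl (Fin.castLE (min_le_right r0 r1) i)))
          (Sum.inr (Sum.inr j) : Fin r0 ⊕ Fin r1 ⊕ Fin r2) *
        matE (Sum.inl (Fin.castLE (min_le_left r0 r1) k))
          (Sum.inr (Sum.inl (Fin.castLE (min_le_right r0 r1) k))) = 0 := by
    intro k
    unfold matE
    exact Matrix.single_mul_single_of_ne _ _ _ _ (by simp) _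
  rw [Finset.sum_congr rfl (fun k _ => h1 k), Finset.sum_const, smul_zero, sub_zero]
  rw [Finset.sum_eq_single i]
  · unfold matE
    rw [Matrix.single_mul_single_same, one_mul]
  · intro k _ hk
    unfold matE
    refine Matrix.single_mul_single_of_ne _ _ _ _ ?_ _
    simp only [ne_eq, Sum.inr.injEq, Sum.inl.injEq]
    intro h
    exact hk (Fin.castLE_injective _ h)
  · intro h; exact absurd (Finset.mem_univ i) h

/-- For `L = g(r₀,r₁,r₂)` and `x = Σ_{i=1}^{min(r₀,r₁)} E_{bᵢ,mᵢ}`, the image of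
`ad_x : L → L` contains `E_{bᵢ,tⱼ}` for all `i ≤ min(r₀,r₁)`, `j ≤ r₂`; in particular
if `r₁ ≥ r₀` then `rank(ad_x) ≥ r₀·r₂`. -/
theorem P3_breadth_element_easy (r0 r1 r2 : ℕ) :
    let L : Submodule ℂ (Matrix (Fin r0 ⊕ Fin r1 ⊕ Fin r2) (Fin r0 ⊕ Fin r1 ⊕ Fin r2) ℂ) :=
      Submodule.span ℂ {m | ∃ p q, P3lt r0 r1 r2 p q ∧ m = matE p q}
    let x : Matrix (Fin r0 ⊕ Fin r1 ⊕ Fin r2) (Fin r0 ⊕ Fin r1 ⊕ Fin r2) ℂ :=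
      ∑ i : Fin (min r0 r1),
        matE (Sum.inl (Fin.castLE (min_le_left r0 r1) i))
          (Sum.inr (Sum.inl (Fin.castLE (min_le_right r0 r1) i)))
    (∀ (i : Fin (min r0 r1)) (j : Fin r2),
        matE (Sum.inl (Fin.castLE (min_le_left r0 r1) i)) (Sum.inr (Sum.inr j)) ∈
          Submodule.map
            (LieAlgebra.ad ℂ (Matrix (Fin r0 ⊕ Fin r1 ⊕ Fin r2) (Fin r0 ⊕ Fin r1 ⊕ Fin r2) ℂ) x)
            L) ∧
      (r0 ≤ r1 →
        r0 * r2 ≤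
          Module.finrank ℂ
            ↥(Submodule.map
              (LieAlgebra.ad ℂ (Matrix (Fin r0 ⊕ Fin r1 ⊕ Fin r2) (Fin r0 ⊕ Fin r1 ⊕ Fin r2) ℂ) x)
              L)) := by
  intro L x
  have key : ∀ (i : Fin (min r0 r1)) (j : Fin r2),
      matE (Sum.inl (Fin.castLE (min_le_left r0 r1) i)) (Sum.inr (Sum.inr j)) ∈
        Submodule.map
          (LieAlgebra.ad ℂ (Matrix (Fin r0 ⊕ Fin r1 ⊕ Fin r2) (Fin r0 ⊕ Fin r1 ⊕ Fin r2) ℂ) x)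
          L := by
    intro i j
    refine ⟨matE (Sum.inr (Sum.inl (Fin.castLE (min_le_right r0 r1) i)))
        (Sum.inr (Sum.inr j)), ?_, ?_⟩
    · refine Submodule.subset_span
        ⟨Sum.inr (Sum.inl (Fin.castLE (min_le_right r0 r1) i)), Sum.inr (Sum.inr j),
          trivial, rfl⟩
    · exact P3_bracket r0 r1 r2 i j
  refine ⟨key, fun h => ?_⟩
  set S := Submodule.map
      (LieAlgebra.ad ℂ (Matrix (Fin r0 ⊕ Fin r1 ⊕ Fin r2) (Fin r0 ⊕ Fin r1 ⊕ Fin r2) ℂ) x) L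
  have hmem : ∀ p : Fin r0 × Fin r2,
      matE (Sum.inl p.1 : Fin r0 ⊕ Fin r1 ⊕ Fin r2) (Sum.inr (Sum.inr p.2)) ∈ S := by
    intro p
    have hr : r0 ≤ min r0 r1 := le_min le_rfl h
    have := key (Fin.castLE hr p.1) p.2
    have heq : Fin.castLE (min_le_left r0 r1) (Fin.castLE hr p.1) = p.1 := by ext; rfl
    rwa [heq] at this
  let g : Fin r0 × Fin r2 → S := fun p => ⟨_, hmem p⟩
  have hinj : Function.Injective
      (fun p : Fin r0 × Fin r2 =>
        ((Sum.inl p.1, Sum.inr (Sum.inr p.2)) :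
          (Fin r0 ⊕ Fin r1 ⊕ Fin r2) × (Fin r0 ⊕ Fin r1 ⊕ Fin r2))) := by
    intro a b hab
    simp only [Prod.mk.injEq, Sum.inl.injEq, Sum.inr.injEq] at hab
    exact Prod.ext hab.1 hab.2
  have hli : LinearIndependent ℂ
      (fun p : Fin r0 × Fin r2 =>
        matE (Sum.inl p.1 : Fin r0 ⊕ Fin r1 ⊕ Fin r2) (Sum.inr (Sum.inr p.2))) := by
    have hb := (Matrix.stdBasis ℂ (Fin r0 ⊕ Fin r1 ⊕ Fin r2)
        (Fin r0 ⊕ Fin r1 ⊕ Fin r2)).linearIndependent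
    have hfun : (fun p : Fin r0 × Fin r2 =>
        matE (Sum.inl p.1 : Fin r0 ⊕ Fin r1 ⊕ Fin r2) (Sum.inr (Sum.inr p.2))) =
        (Matrix.stdBasis ℂ (Fin r0 ⊕ Fin r1 ⊕ Fin r2) (Fin r0 ⊕ Fin r1 ⊕ Fin r2)) ∘
          (fun p : Fin r0 × Fin r2 => (Sum.inl p.1, Sum.inr (Sum.inr p.2))) := by
      funext p
      simp [matE, Function.comp, Matrix.stdBasis_eq_single]
    rw [hfun]
    exact hb.comp _ hinj
  have hlig : LinearIndependent ℂ g := by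
    have : S.subtype ∘ g = fun p : Fin r0 × Fin r2 =>
        matE (Sum.inl p.1 : Fin r0 ⊕ Fin r1 ⊕ Fin r2) (Sum.inr (Sum.inr p.2)) := rfl
    exact LinearIndependent.of_comp S.subtype (this ▸ hli)
  have := hlig.fintype_card_le_finrank
  simpa using this
end

section
/- Let P be a finite poset and L = g^≺(P) its nilpotent Lie poset algebra. Then dim(L/Z(L)) equals the number of strict relations p ≺ q of P such that not both p is minimal and q is maximal in P. -/
/-- The centralizer of a submodule `L` of a matrix algebra, under the commutator
bracket: all matrices commuting (in the Lie sense) with every element of `L`. -/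
noncomputable def lieCentralizer {α : Type*} [Fintype α] [DecidableEq α]
    (L : Submodule ℂ (Matrix α α ℂ)) : Submodule ℂ (Matrix α α ℂ) where
  carrier := {z | ∀ y ∈ L, ⁅z, y⁆ = 0}
  add_mem' := by
    intro a b ha hb y hy
    have h1 := ha y hy
    have h2 := hb y hy
    rw [Ring.lie_def] at h1 h2 ⊢
    rw [add_mul, mul_add, add_sub_add_comm, h1, h2, add_zero]
  zero_mem' := by
    intro y hy
    rw [Ring.lie_def, zero_mul, mul_zero, sub_zero]
  smul_mem' := by
    intro c a ha y hy
    have h1 := ha y hy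
    rw [Ring.lie_def] at h1 ⊢
    rw [smul_mul_assoc, mul_smul_comm, ← smul_sub, h1, smul_zero]

section Aux

variable {α : Type*} [Fintype α] [DecidableEq α]

/-- Span of matrix units over a set of index pairs. -/
noncomputable def Msp (s : Set (α × α)) : Submodule ℂ (Matrix α α ℂ) :=
  Submodule.span ℂ ((fun pq : α × α => matE pq.1 pq.2) '' s)

lemma matE_eq_basis (p q : α) : matE p q = Matrix.stdBasis ℂ α α (p, q) := by
  rw [matE, Matrix.stdBasis_eq_single]

lemma entry_zero_of_mem_Msp {s : Set (α × α)} {z : Matrix α α ℂ} (hz : z ∈ Msp s)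
    {p q : α} (h : (p, q) ∉ s) : z p q = 0 := by
  induction hz using Submodule.span_induction with
  | mem x hx =>
      obtain ⟨pq, hpq, rfl⟩ := hx
      apply Matrix.single_apply_of_ne
      rintro ⟨rfl, rfl⟩
      exact h hpq
  | zero => rfl
  | add x y _ _ hx hy => simp [Matrix.add_apply, hx, hy]
  | smul a x _ hx => simp [Matrix.smul_apply, hx]

lemma mem_Msp_of_entries {s : Set (α × α)} {z : Matrix α α ℂ}
    (h : ∀ p q : α, (p, q) ∉ s → z p q = 0) : z ∈ Msp s := by
  rw [Matrix.matrix_eq_sum_single z]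
  apply Submodule.sum_mem
  intro p _
  apply Submodule.sum_mem
  intro q _
  by_cases hpq : (p, q) ∈ s
  · have : Matrix.single p q (z p q) = z p q • matE p q := by
      rw [matE, Matrix.smul_single, smul_eq_mul, mul_one]
    rw [this]
    exact Submodule.smul_mem _ _ (Submodule.subset_span ⟨(p, q), hpq, rfl⟩)
  · rw [h p q hpq]
    simp

lemma finrank_Msp (s : Set (α × α)) : Module.finrank ℂ (Msp s) = s.ncard := by
  classical
  unfold Msp
  haveI : Fintype s := Fintype.ofFinite s
  have hinj : Set.InjOn (fun pq : α × α => matE pq.1 pq.2) s := by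
    intro a _ b _ hab
    simp only [matE_eq_basis] at hab
    have := (Matrix.stdBasis ℂ α α).injective hab
    exact Prod.ext (congrArg Prod.fst this) (congrArg Prod.snd this)
  have hli : LinearIndependent ℂ
      ((↑) : ((fun pq : α × α => matE pq.1 pq.2) '' s) → Matrix α α ℂ) := by
    have h1 : LinearIndependent ℂ (fun x : s => matE (x : α × α).1 (x : α × α).2) := by
      have := (Matrix.stdBasis ℂ α α).linearIndependent.comp
        ((↑) : s → α × α) Subtype.val_injective
      simpa [matE_eq_basis, Function.comp_def] using this
    have := h1.linearIndepOn_id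
    have hr : Set.range (fun x : s => matE (x : α × α).1 (x : α × α).2)
        = (fun pq : α × α => matE pq.1 pq.2) '' s := by
      ext m; constructor
      · rintro ⟨x, rfl⟩; exact ⟨x, x.2, rfl⟩
      · rintro ⟨pq, hpq, rfl⟩; exact ⟨⟨pq, hpq⟩, rfl⟩
    rwa [hr] at this
  haveI : Fintype ((fun pq : α × α => matE pq.1 pq.2) '' s) := Fintype.ofFinite _
  rw [finrank_span_set_eq_card hli]
  rw [Set.toFinset_image]
  rw [Finset.card_image_of_injOn (by simpa using hinj)]
  rw [← Set.ncard_eq_toFinset_card']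

end Aux

set_option maxHeartbeats 1000000 in
set_option synthInstance.maxHeartbeats 400000 in
/-- For a finite poset `P` and `L = g^≺(P)`, the dimension of `L/Z(L)` equals the
number of strict relations `p ≺ q` of `P` such that not both `p` is minimal and
`q` is maximal. -/
theorem nilpotent_lie_poset_dim_quotient_center (α : Type*) [Fintype α] [DecidableEq α]
    [PartialOrder α] :
    let L : Submodule ℂ (Matrix α α ℂ) :=
      Submodule.span ℂ {m : Matrix α α ℂ | ∃ p q : α, p < q ∧ m = matE p q}
    Module.finrank ℂ (↥L ⧸ Submodule.comap L.subtype (L ⊓ lieCentralizer L)) =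
      Set.ncard {pq : α × α | pq.1 < pq.2 ∧
        ¬((∀ r, ¬ r < pq.1) ∧ (∀ r, ¬ pq.2 < r))} := by
  classical
  intro L
  set S : Set (α × α) := {pq | pq.1 < pq.2} with hS
  set T : Set (α × α) := {pq | pq.1 < pq.2 ∧ (∀ r, ¬ r < pq.1) ∧ (∀ r, ¬ pq.2 < r)} with hT
  have hset : {m : Matrix α α ℂ | ∃ p q : α, p < q ∧ m = matE p q}
      = (fun pq : α × α => matE pq.1 pq.2) '' S := by
    ext m
    constructor
    · rintro ⟨p, q, hpq, rfl⟩; exact ⟨(p, q), hpq, rfl⟩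
    · rintro ⟨⟨p, q⟩, hpq, rfl⟩; exact ⟨p, q, hpq, rfl⟩
  have hLS : L = Msp S := congrArg (Submodule.span ℂ) hset
  -- the center is Msp T
  have hZ : L ⊓ lieCentralizer L = Msp T := by
    apply le_antisymm
    · rintro z ⟨hzL, hzC⟩
      apply mem_Msp_of_entries
      intro p q hpq
      by_cases hlt : p < q
      · -- p < q but not (p minimal and q maximal)
        have hnot : ¬ ((∀ r, ¬ r < p) ∧ (∀ r, ¬ q < r)) := fun h => hpq ⟨hlt, h⟩
        rcases not_and_or.mp hnot with h | h
        · push_neg at h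
          obtain ⟨r, hr⟩ := h
          -- bracket with matE r p, look at entry (r, q)
          have hy : matE r p ∈ L := Submodule.subset_span ⟨r, p, hr, rfl⟩
          have hb := hzC (matE r p) hy
          have h0 := congrFun (congrFun hb r) q
          rw [Ring.lie_def] at h0
          simp only [matE, Matrix.sub_apply, Matrix.zero_apply,
            Matrix.mul_single_apply_of_ne (hbj := ne_of_gt hlt),
            Matrix.single_mul_apply_same, one_mul, zero_sub,
            neg_eq_zero] at h0
          exact h0
        · push_neg at h
          obtain ⟨r, hr⟩ := h
          -- bracket with matE q r, look at entry (p, r)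
          have hy : matE q r ∈ L := Submodule.subset_span ⟨q, r, hr, rfl⟩
          have hb := hzC (matE q r) hy
          have h0 := congrFun (congrFun hb p) r
          rw [Ring.lie_def] at h0
          simp only [matE, Matrix.sub_apply, Matrix.zero_apply,
            Matrix.mul_single_apply_same,
            Matrix.single_mul_apply_of_ne (h := ne_of_lt hlt),
            mul_one, sub_zero] at h0
          exact h0
      · -- not p < q : entry vanishes since z ∈ L
        rw [hLS] at hzL
        exact entry_zero_of_mem_Msp hzL (fun hmem => hlt hmem)
    · apply Submodule.span_le.mpr
      rintro m ⟨⟨p, q⟩, ⟨hpq, hmin, hmax⟩, rfl⟩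
      refine ⟨Submodule.subset_span ⟨p, q, hpq, rfl⟩, ?_⟩
      intro y hy
      induction hy using Submodule.span_induction with
      | mem x hx =>
          obtain ⟨r, s, hrs, rfl⟩ := hx
          have h1 : q ≠ r := fun h => hmax s (h ▸ hrs)
          have h2 : s ≠ p := fun h => hmin r (h ▸ hrs)
          rw [Ring.lie_def]
          simp only [matE]
          rw [Matrix.single_mul_single_of_ne (h := h1),
            Matrix.single_mul_single_of_ne (h := h2), sub_zero]
      | zero => rw [Ring.lie_def, mul_zero, zero_mul, sub_zero]
      | add x y _ _ hx hy => rw [Ring.lie_def] at hx hy ⊢; rw [mul_add, add_mul, add_sub_add_comm, hx, hy, add_zero]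
      | smul a x _ hx => rw [Ring.lie_def] at hx ⊢; rw [mul_smul_comm, smul_mul_assoc, ← smul_sub, hx, smul_zero]
  -- rank computation
  have hTS : T ⊆ S := fun pq h => h.1
  have hfinL : Module.finrank ℂ L = S.ncard := by rw [hLS, finrank_Msp]
  have hle : L ⊓ lieCentralizer L ≤ L := inf_le_left
  have hfinZ : Module.finrank ℂ (Submodule.comap L.subtype (L ⊓ lieCentralizer L))
      = T.ncard := by
    rw [(Submodule.comapSubtypeEquivOfLe hle).finrank_eq, hZ, finrank_Msp]
  have hsum := Submodule.finrank_quotient_add_finrank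
    (Submodule.comap L.subtype (L ⊓ lieCentralizer L))
  rw [hfinZ, hfinL] at hsum
  have htarget : {pq : α × α | pq.1 < pq.2 ∧
      ¬((∀ r, ¬ r < pq.1) ∧ (∀ r, ¬ pq.2 < r))} = S \ T := by
    ext pq
    simp only [Set.mem_setOf_eq, Set.mem_diff, hS, hT, Set.mem_setOf_eq]
    tauto
  rw [htarget, Set.ncard_diff hTS]
  omega
end
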